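/- Let F/k be a field extension and let V_F = F ⊗_k V be the base change of V, with G acting through its action on V. For every natural number d, k[V]_{≤d} spans k(V) as a k(V)^G-vector space if and only if F[V_F]_{≤d} spans F(V_F) as an F(V_F)^G-vector space. Consequently, D_span(G, V_F) = D_span(G, V). -/

import Mathlib

open MvPolynomial

set_option synthInstance.maxHeartbeats 1000000
set_option maxHeartbeats 1000000



section Aux
variable {G : Type*} [Group G] [Fintype G]

lemma aux_span_of_perp {L : Type*} [Field L] (T : Set (G → L))
    (h : ∀ c : G → L, (∀ w ∈ T, ∑ g, c g * w g = 0) → c = 0) :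
    Submodule.span L T = ⊤ := by
  classical
  by_contra hs
  obtain ⟨x, hx⟩ : ∃ x, x ∉ Submodule.span L T := by
    by_contra h'
    push_neg at h'
    exact hs (top_unique fun y _ => h' y)
  obtain ⟨φ, hφx, hφ⟩ := Submodule.exists_dual_map_eq_bot_of_notMem hx inferInstance
  have hker : ∀ w ∈ Submodule.span L T, φ w = 0 := by
    intro w hw
    have : φ w ∈ (Submodule.span L T).map φ := Submodule.mem_map_of_mem hw
    rw [hφ] at this
    exact (Submodule.mem_bot L).1 this
  set c : G → L := fun g => φ (Pi.single g 1) with hc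
  have hrep : ∀ w : G → L, φ w = ∑ g, c g * w g := by
    intro w
    have hw : (∑ g, Pi.single g (w g)) = w := Finset.univ_sum_single w
    calc φ w = φ (∑ g, Pi.single g (w g)) := by rw [hw]
      _ = ∑ g, φ (Pi.single g (w g)) := map_sum φ _ _
      _ = ∑ g, c g * w g := by
          refine Finset.sum_congr rfl fun g _ => ?_
          have h1 : Pi.single g (w g) = w g • (Pi.single g (1 : L) : G → L) := by
            rw [← Pi.single_smul, smul_eq_mul, mul_one]
          rw [h1, map_smul, smul_eq_mul, hc, mul_comm]
  have hc0 : c = 0 := by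
    refine h c fun w hw => ?_
    have := hker w (Submodule.subset_span hw)
    rw [hrep w] at this
    simpa [mul_comm] using this
  apply hφx
  rw [hrep x, hc0]
  simp

/-- Vanishing of linear functionals along a ring hom, given spanning. -/
lemma aux_perp_of_span {L L' : Type*} [Field L] [Field L'] (ι : L →+* L')
    (T : Set (G → L)) (h : Submodule.span L T = ⊤)
    (c : G → L') (hc : ∀ w ∈ T, ∑ g, c g * ι (w g) = 0) : c = 0 := by
  classical
  letI : Algebra L L' := ι.toAlgebra
  have hsmul : ∀ (a : L) (x : L'), a • x = ι a * x := fun a x => rfl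
  let Φ : (G → L) →ₗ[L] L' :=
    { toFun := fun w => ∑ g, c g * ι (w g)
      map_add' := by
        intro u v
        rw [← Finset.sum_add_distrib]
        refine Finset.sum_congr rfl fun g _ => ?_
        simp [map_add, mul_add]
      map_smul' := by
        intro a w
        simp only [RingHom.id_apply]
        rw [hsmul, Finset.mul_sum]
        refine Finset.sum_congr rfl fun g _ => ?_
        simp only [Pi.smul_apply, smul_eq_mul, map_mul]
        ring }
  have hΦ : ∀ w, Φ w = 0 := by
    intro w
    have hle : Submodule.span L T ≤ LinearMap.ker Φ := by
      rw [Submodule.span_le]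
      intro u hu
      exact hc u hu
    have hker : LinearMap.ker Φ = ⊤ := top_unique (h ▸ hle)
    have : w ∈ LinearMap.ker Φ := by rw [hker]; trivial
    exact this
  funext g₀
  have hv := hΦ (Pi.single g₀ (1 : L))
  have heval : Φ (Pi.single g₀ (1 : L)) = c g₀ := by
    show (∑ g, c g * ι ((Pi.single g₀ (1:L) : G → L) g)) = c g₀
    rw [Finset.sum_eq_single g₀]
    · simp
    · intro b _ hb
      rw [Pi.single_eq_of_ne hb]
      simp
    · intro hb
      exact absurd (Finset.mem_univ g₀) hb
  rw [heval] at hv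
  simpa using hv




variable {G : Type*} [Group G] [Fintype G]

set_option maxHeartbeats 1000000 in
lemma aux_key {L : Type*} [Field L] [MulSemiringAction G L]
    (hf : ∀ g : G, (∀ x : L, g • x = x) → g = 1) (S : Set L) :
    Submodule.span (FixedPoints.subfield G L) S = ⊤ ↔
      Submodule.span L ((fun s (g : G) => g • s) '' S) = ⊤ := by
  classical
  constructor
  · intro hspan
    apply aux_span_of_perp
    intro c hc
    -- ψ vanishes on S
    have hcS : ∀ s ∈ S, ∑ g, c g * (g • s) = 0 := fun s hs =>
      hc _ (Set.mem_image_of_mem _ hs)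
    -- ψ is K-linear
    set K := FixedPoints.subfield G L
    let Ψ : L →ₗ[K] L :=
      { toFun := fun x => ∑ g, c g * (g • x)
        map_add' := by
          intro u v
          rw [← Finset.sum_add_distrib]
          exact Finset.sum_congr rfl fun g _ => by rw [smul_add, mul_add]
        map_smul' := by
          intro a x
          simp only [RingHom.id_apply]
          have : ∀ g : G, g • ((a : L) * x) = (a : L) * (g • x) := by
            intro g
            rw [smul_mul', a.2 g]
          show (∑ g, c g * (g • ((a:L) * x))) = (a:L) * ∑ g, c g * (g • x)
          rw [Finset.mul_sum]
          exact Finset.sum_congr rfl fun g _ => by rw [this g]; ring }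
    have hΨ0 : ∀ x, Ψ x = 0 := by
      intro x
      have hle : Submodule.span K S ≤ LinearMap.ker Ψ := by
        rw [Submodule.span_le]; exact fun s hs => hcS s hs
      have hker : LinearMap.ker Ψ = ⊤ := top_unique (hspan ▸ hle)
      have : x ∈ LinearMap.ker Ψ := by rw [hker]; trivial
      exact this
    -- Dedekind independence
    let τ : G → (L →* L) := fun g => (MulSemiringAction.toRingHom G L g).toMonoidHom
    have hτ : Function.Injective τ := by
      intro g g' hgg'
      have hx : ∀ x : L, g • x = g' • x := fun x => DFunLike.congr_fun hgg' x
      have h1 : (g'⁻¹ * g) = 1 := by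
        apply hf
        intro x
        rw [mul_smul, hx x, ← mul_smul, inv_mul_cancel, one_smul]
      exact (inv_mul_eq_one.mp h1).symm
    have hli : LinearIndependent L fun g : G => ((τ g : L →* L) : L → L) :=
      (linearIndependent_monoidHom L L).comp τ hτ
    have hzero : (∑ g, c g • ((τ g : L →* L) : L → L)) = 0 := by
      funext x
      have := hΨ0 x
      rw [Finset.sum_apply]
      exact this
    exact funext (Fintype.linearIndependent_iff.mp hli c hzero)
  · intro hspan
    set K := FixedPoints.subfield G L
    set v : L → (G → L) := fun s g => g • s with hv
    obtain ⟨b, hbsub, hbspan, hbind⟩ := exists_linearIndependent L (v '' S)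
    rw [hspan] at hbspan
    haveI : Fintype b := (hbind.setFinite).fintype
    have hspanb : ⊤ ≤ Submodule.span L (Set.range fun x : b => (x : G → L)) := by
      rw [Subtype.range_coe]; exact hbspan.ge
    let B : Module.Basis b L (G → L) := Module.Basis.mk hbind hspanb
    -- choose preimages
    have hσ : ∀ w : b, ∃ s, s ∈ S ∧ v s = (w : G → L) := fun w => hbsub w.2
    choose σ hσS hσv using hσ
    rw [Submodule.eq_top_iff']
    intro x
    set u : G → L := fun g => g • x with hu
    set c : b → L := fun w => B.repr u w with hcdef
    have hrep : ∑ w : b, c w • (w : G → L) = u := by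
      have := B.sum_repr u
      calc ∑ w : b, c w • (w : G → L) = ∑ w : b, B.repr u w • B w :=
            Finset.sum_congr rfl fun w _ => by
              rw [show B w = (w : G → L) from Module.Basis.mk_apply hbind hspanb w]
        _ = u := this
    have hfix : ∀ (h : G) (w : b), h • c w = c w := by
      intro h w0
      have hrep' : ∑ w : b, (h • c w) • (w : G → L) = u := by
        funext g
        have h1 := congrFun hrep (h⁻¹ * g)
        -- h1 : ∑ w, c w * ((h⁻¹ * g) • σ w) = (h⁻¹ * g) • x
        have h2 : h • ((∑ w : b, c w • (w : G → L)) (h⁻¹ * g)) = h • (u (h⁻¹*g)) := by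
          rw [h1]
        rw [Finset.sum_apply] at h2 ⊢
        have h3 : h • (u (h⁻¹*g)) = u g := by
          show h • ((h⁻¹ * g) • x) = g • x
          rw [← mul_smul, ← mul_assoc, mul_inv_cancel, one_mul]
        rw [← h3, ← h2, Finset.smul_sum]
        refine Finset.sum_congr rfl fun w _ => ?_
        have hw : ∀ g' : G, (w : G → L) g' = g' • σ w := by
          intro g'; rw [← hσv w]
        simp only [Pi.smul_apply, smul_eq_mul]
        rw [hw g, hw (h⁻¹ * g), smul_mul', ← mul_smul, ← mul_assoc, mul_inv_cancel, one_mul]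
      -- uniqueness of representation
      have hdiff : ∑ w : b, (c w - h • c w) • (w : G → L) = 0 := by
        simp only [sub_smul]
        rw [Finset.sum_sub_distrib, hrep, hrep', sub_self]
      have := Fintype.linearIndependent_iff.mp hbind (fun w => c w - h • c w) hdiff w0
      exact (sub_eq_zero.mp this).symm
    have hcK : ∀ w : b, c w ∈ K := fun w => fun h => hfix h w
    have hx : x = ∑ w : b, c w * σ w := by
      have := congrFun hrep 1
      rw [Finset.sum_apply] at this
      simp only [hu, one_smul] at this
      rw [← this]
      refine Finset.sum_congr rfl fun w _ => ?_
      have hw : (w : G → L) 1 = (1 : G) • σ w := by rw [← hσv w]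
      simp only [Pi.smul_apply, smul_eq_mul]
      rw [hw, one_smul]
    rw [hx]
    refine Submodule.sum_mem _ fun w _ => ?_
    have : c w * σ w = (⟨c w, hcK w⟩ : K) • σ w := rfl
    rw [this]
    exact Submodule.smul_mem _ _ (Submodule.subset_span (hσS w))



lemma aux_transfer {L L' : Type*} [Field L] [Field L'] (ι : L →+* L') (T : Set (G → L)) :
    Submodule.span L T = ⊤ ↔ Submodule.span L' ((fun w => ι ∘ w) '' T) = ⊤ := by
  constructor
  · intro h
    apply aux_span_of_perp
    rintro c hc
    refine aux_perp_of_span ι T h c fun w hw => ?_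
    exact hc _ (Set.mem_image_of_mem _ hw)
  · intro h
    apply aux_span_of_perp
    intro c hc
    have h2 : ∀ w' ∈ (fun w => ι ∘ w) '' T,
        ∑ g, (fun g => ι (c g)) g * (RingHom.id L') (w' g) = 0 := by
      rintro w' ⟨w, hw, rfl⟩
      simp only [RingHom.id_apply, Function.comp_apply]
      rw [← map_zero ι, ← hc w hw, map_sum]
      exact Finset.sum_congr rfl fun g _ => (map_mul ι _ _).symm
    have h3 := aux_perp_of_span (RingHom.id L') _ h _ h2
    funext g
    exact ι.injective (by simpa using congrFun h3 g)



end Aux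

/-- **Lemma (base change invariance of the spanning degree).** Let `F/k` be a field extension
and `V_F = F ⊗_k V` the base change of the representation `V` (encoded: `G` acts linearly on
`k[V] = k[X_1,…,X_n]` and on `F[V_F] = F[X_1,…,X_n]`, compatibly with the coefficient
extension map).  Then for every `d`, the polynomials of degree `≤ d` span `k(V)` over
`k(V)^G` iff the polynomials of degree `≤ d` span `F(V_F)` over `F(V_F)^G`; consequently
`D_span(G, V_F) = D_span(G, V)`. -/
theorem spanning_degree_base_change
    (k : Type*) [Field k] (F : Type*) [Field F] [Algebra k F]
    (n : ℕ) (G : Type*) [Group G] [Fintype G]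
    [MulSemiringAction G (MvPolynomial (Fin n) k)]
    [SMulCommClass G k (MvPolynomial (Fin n) k)]
    (hlin : ∀ (g : G) (i : Fin n), ((g • (X i : MvPolynomial (Fin n) k)).IsHomogeneous 1))
    (hfaithful : ∀ g : G, (∀ p : MvPolynomial (Fin n) k, g • p = p) → g = 1)
    [MulSemiringAction G (MvPolynomial (Fin n) F)]
    [SMulCommClass G F (MvPolynomial (Fin n) F)]
    -- the action on `F[V_F]` is obtained from the action on `k[V]` by extension of scalars:
    (hbase : ∀ (g : G) (p : MvPolynomial (Fin n) k),
      g • (MvPolynomial.map (algebraMap k F) p) = MvPolynomial.map (algebraMap k F) (g • p))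
    [MulSemiringAction G (FractionRing (MvPolynomial (Fin n) k))]
    (hcompk : ∀ (g : G) (p : MvPolynomial (Fin n) k),
      g • (algebraMap (MvPolynomial (Fin n) k) (FractionRing (MvPolynomial (Fin n) k)) p)
        = algebraMap (MvPolynomial (Fin n) k) (FractionRing (MvPolynomial (Fin n) k)) (g • p))
    [MulSemiringAction G (FractionRing (MvPolynomial (Fin n) F))]
    (hcompF : ∀ (g : G) (p : MvPolynomial (Fin n) F),
      g • (algebraMap (MvPolynomial (Fin n) F) (FractionRing (MvPolynomial (Fin n) F)) p)
        = algebraMap (MvPolynomial (Fin n) F) (FractionRing (MvPolynomial (Fin n) F)) (g • p)) :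
    (∀ d : ℕ,
      Submodule.span (FixedPoints.subfield G (FractionRing (MvPolynomial (Fin n) k)))
        ((algebraMap (MvPolynomial (Fin n) k) (FractionRing (MvPolynomial (Fin n) k))) ''
          {p : MvPolynomial (Fin n) k | p.totalDegree ≤ d}) = ⊤
      ↔
      Submodule.span (FixedPoints.subfield G (FractionRing (MvPolynomial (Fin n) F)))
        ((algebraMap (MvPolynomial (Fin n) F) (FractionRing (MvPolynomial (Fin n) F))) ''
          {p : MvPolynomial (Fin n) F | p.totalDegree ≤ d}) = ⊤) ∧
    sInf {d : ℕ |
      Submodule.span (FixedPoints.subfield G (FractionRing (MvPolynomial (Fin n) F)))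
        ((algebraMap (MvPolynomial (Fin n) F) (FractionRing (MvPolynomial (Fin n) F))) ''
          {p : MvPolynomial (Fin n) F | p.totalDegree ≤ d}) = ⊤}
    = sInf {d : ℕ |
      Submodule.span (FixedPoints.subfield G (FractionRing (MvPolynomial (Fin n) k)))
        ((algebraMap (MvPolynomial (Fin n) k) (FractionRing (MvPolynomial (Fin n) k))) ''
          {p : MvPolynomial (Fin n) k | p.totalDegree ≤ d}) = ⊤} := by
  classical
  set Rk := MvPolynomial (Fin n) k with hRk
  set RF := MvPolynomial (Fin n) F with hRF
  set L := FractionRing Rk with hL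
  set L' := FractionRing RF with hL'
  let φ : Rk →+* RF := MvPolynomial.map (algebraMap k F)
  have hφinj : Function.Injective φ :=
    MvPolynomial.map_injective _ (algebraMap k F).injective
  let ψ : Rk →+* L' := (algebraMap RF L').comp φ
  have hψinj : Function.Injective ψ :=
    (IsFractionRing.injective RF L').comp hφinj
  let ι : L →+* L' := IsFractionRing.lift hψinj
  have hι : ∀ p : Rk, ι (algebraMap Rk L p) = algebraMap RF L' (φ p) := fun p =>
    IsFractionRing.lift_algebraMap hψinj p
  -- smul of division
  have hdivL : ∀ (g : G) (a b : L), g • (a / b) = (g • a) / (g • b) := fun g a b =>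
    map_div₀ (MulSemiringAction.toRingHom G L g) a b
  have hdivL' : ∀ (g : G) (a b : L'), g • (a / b) = (g • a) / (g • b) := fun g a b =>
    map_div₀ (MulSemiringAction.toRingHom G L' g) a b
  -- equivariance of ι
  have hbase' : ∀ (g : G) (p : Rk), g • φ p = φ (g • p) := hbase
  have hequiv : ∀ (g : G) (x : L), g • ι x = ι (g • x) := by
    intro g x
    obtain ⟨p, q, hq, rfl⟩ := IsFractionRing.div_surjective (A := Rk) x
    rw [map_div₀, hι, hι, hdivL', hdivL, map_div₀, hcompk, hcompk, hι, hι,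
      hcompF, hcompF, hbase', hbase']
  -- faithfulness
  have hfL : ∀ g : G, (∀ x : L, g • x = x) → g = 1 := by
    intro g hg
    apply hfaithful
    intro p
    apply IsFractionRing.injective Rk L
    rw [← hcompk, hg]
  have hfL' : ∀ g : G, (∀ x : L', g • x = x) → g = 1 := by
    intro g hg
    apply hfaithful
    intro p
    apply hφinj
    apply IsFractionRing.injective RF L'
    rw [← hbase, ← hcompF, hg]
  -- the degree bound under φ
  have hdeg : ∀ p : Rk, (φ p).totalDegree ≤ p.totalDegree := by
    intro p
    exact Finset.sup_mono (MvPolynomial.support_map_subset _ p)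
  -- main iff for each d
  have hiff : ∀ d : ℕ,
      Submodule.span (FixedPoints.subfield G L)
        ((algebraMap Rk L) '' {p : Rk | p.totalDegree ≤ d}) = ⊤
      ↔ Submodule.span (FixedPoints.subfield G L')
        ((algebraMap RF L') '' {p : RF | p.totalDegree ≤ d}) = ⊤ := by
    intro d
    set Sk : Set L := (algebraMap Rk L) '' {p : Rk | p.totalDegree ≤ d} with hSk
    set SF : Set L' := (algebraMap RF L') '' {p : RF | p.totalDegree ≤ d} with hSF
    rw [aux_key hfL Sk, aux_key hfL' SF, aux_transfer ι]
    -- remains: span L' ((ι ∘ ·) '' (v '' Sk)) = ⊤ ↔ span L' (v' '' SF) = ⊤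
    have hkey : Submodule.span L' ((fun w => ι ∘ w) '' ((fun s (g : G) => g • s) '' Sk))
        = Submodule.span L' ((fun s (g : G) => g • s) '' SF) := by
      -- images of k-vectors are F-vectors of the mapped polynomials
      have himg : ∀ p : Rk, (ι ∘ fun g : G => g • (algebraMap Rk L p))
          = fun g : G => g • (algebraMap RF L' (φ p)) := by
        intro p
        funext g
        show ι (g • algebraMap Rk L p) = g • algebraMap RF L' (φ p)
        rw [← hequiv, hι]
      apply le_antisymm
      · rw [Submodule.span_le]
        rintro w ⟨w', ⟨s, ⟨p, hp, rfl⟩, rfl⟩, rfl⟩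
        apply Submodule.subset_span
        refine ⟨algebraMap RF L' (φ p), ⟨φ p, le_trans (hdeg p) hp, rfl⟩, ?_⟩
        exact (himg p).symm
      · rw [Submodule.span_le]
        rintro w ⟨s, ⟨q, hq, rfl⟩, rfl⟩
        show (fun g : G => g • (algebraMap RF L') q) ∈
          Submodule.span L' ((fun w => ι ∘ w) '' ((fun s (g : G) => g • s) '' Sk))
        -- expand q into monomials
        have hexp : (fun g : G => g • algebraMap RF L' q)
            = ∑ α ∈ q.support, (algebraMap RF L' (MvPolynomial.C (q.coeff α))) •
                (fun g : G => g • algebraMap RF L' (MvPolynomial.monomial α (1 : F))) := by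
          funext g
          rw [Finset.sum_apply]
          simp only [Pi.smul_apply, smul_eq_mul]
          conv_lhs => rw [← MvPolynomial.support_sum_monomial_coeff q]
          rw [map_sum, Finset.smul_sum]
          refine Finset.sum_congr rfl fun α hα => ?_
          rw [hcompF, hcompF, ← map_mul]
          congr 1
          have h1 : MvPolynomial.monomial α (q.coeff α)
              = (q.coeff α) • MvPolynomial.monomial α (1 : F) := by
            rw [MvPolynomial.smul_monomial, smul_eq_mul, mul_one]
          rw [h1, smul_comm, MvPolynomial.smul_eq_C_mul]
        rw [hexp]
        refine Submodule.sum_mem _ fun α hα => ?_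
        refine Submodule.smul_mem _ _ (Submodule.subset_span ?_)
        refine ⟨fun g : G => g • algebraMap Rk L (MvPolynomial.monomial α (1 : k)),
          ⟨algebraMap Rk L (MvPolynomial.monomial α (1 : k)),
            ⟨MvPolynomial.monomial α (1 : k), ?_, rfl⟩, rfl⟩, ?_⟩
        · show (MvPolynomial.monomial α (1 : k)).totalDegree ≤ d
          rw [MvPolynomial.totalDegree_monomial _ (one_ne_zero)]
          exact le_trans (MvPolynomial.le_totalDegree (by simpa using hα)) hq
        · have hmono : φ (MvPolynomial.monomial α (1 : k))
              = MvPolynomial.monomial α (1 : F) := by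
            rw [MvPolynomial.map_monomial, map_one]
          have h5 := himg (MvPolynomial.monomial α (1 : k))
          rw [hmono] at h5
          exact h5
    rw [hkey]
  refine ⟨hiff, ?_⟩
  exact congrArg sInf (Set.ext fun d => (hiff d).symm)
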